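/- Every p-dominion in a parity game contains at least one p-tangle: if D is a p-dominion for player α = p mod 2, then there exist U ⊆ D and a strategy σ' such that (U, σ') is a p-tangle. -/

import Mathlib

open scoped Classical

/-- A parity game on a finite vertex type `V`.  Player `false` is Even and
player `true` is Odd; `owner v` is the player controlling vertex `v`,
`edge` is the (left-total) move relation and `pr` assigns priorities. -/
structure ParityGame (V : Type) [Fintype V] where
  owner : V → Bool
  edge : V → V → Prop
  total : ∀ v, ∃ w, edge v w
  pr : V → ℕ

namespace ParityGame

variable {V : Type} [Fintype V] (G : ParityGame V)

/-- The player whose parity matches the priority `p` (`false` = Even, `true` = Odd). -/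
def playerOf (p : ℕ) : Bool := decide (p % 2 = 1)

/-- A play is an infinite sequence of vertices consistent with the edge relation. -/
def IsPlay (π : ℕ → V) : Prop := ∀ i, G.edge (π i) (π (i + 1))

/-- The set of vertices occurring infinitely often in `π`. -/
def infOcc (π : ℕ → V) : Set V := {v | ∀ n : ℕ, ∃ m, n ≤ m ∧ π m = v}

/-- The highest priority of a vertex in `S`. -/
noncomputable def maxPr (S : Set V) : ℕ := sSup (G.pr '' S)

/-- Player `α` wins the play `π` iff the highest priority occurring infinitely
often in `π` has `α`'s parity. -/
def Wins (α : Bool) (π : ℕ → V) : Prop := playerOf (G.maxPr (infOcc π)) = α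

/-- A (positional, partial) strategy for player `α`. -/
def IsStrategy (α : Bool) (σ : V → Option V) : Prop :=
  ∀ v w, σ v = some w → G.owner v = α ∧ G.edge v w

/-- A play is consistent with the strategy `σ`. -/
def Consistent (σ : V → Option V) (π : ℕ → V) : Prop :=
  ∀ i w, σ (π i) = some w → π (i + 1) = w

/-- All plays starting in `U` that are consistent with `σ`. -/
def PlaysFrom (U : Set V) (σ : V → Option V) : Set (ℕ → V) :=
  {π | G.IsPlay π ∧ π 0 ∈ U ∧ Consistent σ π}

/-- `U` is closed with respect to player `α`: every `α`-vertex of `U` has a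
successor in `U` and every opponent vertex of `U` has all successors in `U`. -/
def ClosedFor (α : Bool) (U : Set V) : Prop :=
  (∀ v ∈ U, G.owner v = α → ∃ w ∈ U, G.edge v w) ∧
  (∀ v ∈ U, G.owner v ≠ α → ∀ w, G.edge v w → w ∈ U)

/-- `D` is an `α`-dominion with (winning) strategy `σ`: `D` is closed for `α`,
`σ` is a strategy of `α` defined on all `α`-vertices of `D` with values in `D`,
and `α` wins every consistent play from `D`. -/
def IsDominionWith (α : Bool) (D : Set V) (σ : V → Option V) : Prop :=
  G.ClosedFor α D ∧ G.IsStrategy α σ ∧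
  (∀ v ∈ D, G.owner v = α → ∃ w ∈ D, σ v = some w) ∧
  ∀ π ∈ G.PlaysFrom D σ, G.Wins α π

/-- `D` is an `α`-dominion. -/
def IsDominion (α : Bool) (D : Set V) : Prop := ∃ σ, G.IsDominionWith α D σ

/-- The value of a play: the highest priority occurring infinitely often. -/
noncomputable def playValue (π : ℕ → V) : ℕ := G.maxPr (infOcc π)

/-- `D` is a `p`-dominion with winning strategy `σ`: a dominion such that `p` is
the maximum, over all consistent plays from `D`, of the highest priority seen
infinitely often. -/
def IsPDominionWith (α : Bool) (p : ℕ) (D : Set V) (σ : V → Option V) : Prop :=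
  G.IsDominionWith α D σ ∧ IsGreatest (G.playValue '' G.PlaysFrom D σ) p

/-- `D` is a `p`-dominion for player `α`. -/
def IsPDominion (α : Bool) (p : ℕ) (D : Set V) : Prop := ∃ σ, G.IsPDominionWith α p D σ

/-- The edges of the subgame `G[U,σ]` induced by `U` and the strategy `σ`. -/
def subEdge (U : Set V) (σ : V → Option V) (u v : V) : Prop :=
  u ∈ U ∧ v ∈ U ∧ G.edge u v ∧ (σ u = none ∨ σ u = some v)

/-- `G[U,σ]` is strongly connected. -/
def StronglyConnected (U : Set V) (σ : V → Option V) : Prop :=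
  ∀ u ∈ U, ∀ v ∈ U, Relation.ReflTransGen (G.subEdge U σ) u v

/-- A cycle of `G[U,σ]`: from `v` through the list `l` back to `v`. -/
def IsCycle (U : Set V) (σ : V → Option V) (v : V) (l : List V) : Prop :=
  List.Chain (G.subEdge U σ) v (l ++ [v])

/-- Player `α` wins all cycles of `G[U,σ]`: the maximum priority on every cycle
has `α`'s parity. -/
def WinsAllCycles (α : Bool) (U : Set V) (σ : V → Option V) : Prop :=
  ∀ v l, G.IsCycle U σ v l → playerOf (G.maxPr {x | x ∈ v :: l}) = α

/-- `(U, σ)` is a tangle: `U` is nonempty, `σ` is a strategy for the player `α`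
of the parity of the highest priority of `U`, defined exactly on the
`α`-vertices of `U` with values in `U`, the subgame `G[U,σ]` is strongly
connected, and player `α` wins all cycles of `G[U,σ]`. -/
def IsTangle (U : Set V) (σ : V → Option V) : Prop :=
  U.Nonempty ∧
  (∀ v w, σ v = some w → v ∈ U ∧ w ∈ U ∧ G.owner v = playerOf (G.maxPr U) ∧ G.edge v w) ∧
  (∀ v ∈ U, G.owner v = playerOf (G.maxPr U) → (σ v).isSome) ∧
  G.StronglyConnected U σ ∧
  G.WinsAllCycles (playerOf (G.maxPr U)) U σ

/-- The escapes `E_T(T)` of a tangle with vertex set `U`: the successors outside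
`U` of the opponent's vertices in `U`. -/
def escapes (U : Set V) : Set V :=
  {v | v ∉ U ∧ ∃ u ∈ U, G.owner u ≠ playerOf (G.maxPr U) ∧ G.edge u v}

/-- The restriction of a strategy to a set `U`. -/
noncomputable def restrict (σ : V → Option V) (U : Set V) : V → Option V :=
  fun v => if v ∈ U then σ v else none

/-- The attractor of `A` for player `α`: the least fixpoint of
`Z := A ∪ {v ∈ V_α | E(v) ∩ Z ≠ ∅} ∪ {v ∈ V_ᾱ | E(v) ⊆ Z}`. -/
inductive Attr (α : Bool) (A : Set V) : V → Prop
  | base : ∀ v, v ∈ A → Attr α A v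
  | step : ∀ v w, G.owner v = α → G.edge v w → Attr α A w → Attr α A v
  | forced : ∀ v, G.owner v ≠ α → (∀ w, G.edge v w → Attr α A w) → Attr α A v

/-- The attractor of `A` for player `α`, as a set. -/
def attrSet (α : Bool) (A : Set V) : Set V := {v | G.Attr α A v}

/-- The tangle attractor of `A` for player `α` with tangle set `TT`: the least
fixpoint additionally attracting all vertices of `α`-tangles of `TT` whose
escapes all lie in the attracting set. -/
inductive TAttr (α : Bool) (TT : Set (Set V × (V → Option V))) (A : Set V) : V → Prop
  | base : ∀ v, v ∈ A → TAttr α TT A v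
  | step : ∀ v w, G.owner v = α → G.edge v w → TAttr α TT A w → TAttr α TT A v
  | forced : ∀ v, G.owner v ≠ α → (∀ w, G.edge v w → TAttr α TT A w) → TAttr α TT A v
  | tangle : ∀ (U : Set V) (τ : V → Option V) (v : V), (U, τ) ∈ TT →
      G.IsTangle U τ → playerOf (G.maxPr U) = α →
      (∀ w ∈ G.escapes U, TAttr α TT A w) → v ∈ U → TAttr α TT A v

/-- The tangle attractor of `A` for player `α`, as a set. -/
def tattrSet (α : Bool) (TT : Set (Set V × (V → Option V))) (A : Set V) : Set V :=
  {v | G.TAttr α TT A v}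

end ParityGame

namespace ParityGame

variable {V : Type} [Fintype V]

/-- From a cycle chain we get a step relation on cyclic indices. -/
private lemma cycle_get {R : V → V → Prop} {v : V} {l : List V}
    (hc : List.Chain R v (l ++ [v])) :
    ∀ i (h : i < (v :: l).length),
      R ((v :: l).get ⟨i, h⟩)
        ((v :: l).get ⟨(i + 1) % (v :: l).length,
          Nat.mod_lt _ (by simp)⟩) := by
  have hc' := List.isChain_iff_getElem.mp (show List.IsChain R (v :: (l ++ [v])) from hc)
  have h0 : ∀ h : 0 < (l ++ [v]).length, R v ((l ++ [v]).get ⟨0, h⟩) := fun h =>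
    hc' 0 (by simp only [List.length_cons, List.length_append, List.length_singleton] at h ⊢; omega)
  have hs : ∀ i (h : i < (l ++ [v]).length - 1),
      R ((l ++ [v]).get ⟨i, by omega⟩) ((l ++ [v]).get ⟨i + 1, by omega⟩) := fun i h =>
    hc' (i + 1) (by simp only [List.length_cons, List.length_append, List.length_singleton] at h ⊢; omega)
  set n := l.length with hn
  have hlen : (l ++ [v]).length = n + 1 := by simp [hn]
  -- the (i)-th step of the chain, as a relation between elements of l ++ [v]
  have key : ∀ i (h : i < n + 1),
      R ((v :: l).get ⟨i, by simpa using h⟩)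
        ((l ++ [v]).get ⟨i, by omega⟩) := by
    intro i h
    match i with
    | 0 => exact h0 (by omega)
    | (j+1) =>
      have hj : j < n := by omega
      have h2 := hs j (by simpa using hj)
      simp only [List.get_eq_getElem] at h2 ⊢
      rw [List.getElem_append_left hj] at h2
      simpa using h2
  have eq1 : ∀ j (h : j < n + 1),
      (l ++ [v]).get ⟨j, by omega⟩
        = (v :: l).get ⟨(j + 1) % (n + 1), Nat.mod_lt _ (by omega)⟩ := by
    intro j h
    rcases Nat.lt_or_ge j n with hj | hj
    · have hmod : (j + 1) % (n + 1) = j + 1 := Nat.mod_eq_of_lt (by omega)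
      simp only [List.get_eq_getElem, hmod]
      rw [List.getElem_append_left (by omega)]
      simp
    · have hj' : j = n := by omega
      have hmod : (j + 1) % (n + 1) = 0 := by rw [hj']; exact Nat.mod_self _
      simp only [List.get_eq_getElem, hmod]
      rw [List.getElem_append_right (by omega)]
      simp [hj', hn]
  intro i h
  have h' : i < n + 1 := by simpa using h
  have := key i h'
  rw [eq1 i h'] at this
  simpa using this

/-- every `p`-dominion contains a `p`-tangle. -/
theorem pdominion_contains_ptangle (G : ParityGame V) (p : ℕ) (D : Set V)
    (h : G.IsPDominion (playerOf p) p D) :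
    ∃ (U : Set V) (σ' : V → Option V), U ⊆ D ∧ G.IsTangle U σ' ∧ G.maxPr U = p := by
  obtain ⟨σ, ⟨⟨hclosed, hstrat, hdef, hwin⟩, hgr⟩⟩ := h
  obtain ⟨π, hπ, hval⟩ := hgr.1
  obtain ⟨hplay, h0D, hcons⟩ := hπ
  set U := infOcc π with hU
  -- the play stays in D
  have hinD : ∀ i, π i ∈ D := by
    intro i
    induction i with
    | zero => exact h0D
    | succ n ih =>
      by_cases ho : G.owner (π n) = playerOf p
      · obtain ⟨w, hwD, hw⟩ := hdef (π n) ih ho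
        rw [hcons n w hw]; exact hwD
      · exact hclosed.2 (π n) ih ho _ (hplay n)
  have hUD : U ⊆ D := by
    rintro v hv
    obtain ⟨m, _, rfl⟩ := hv 0
    exact hinD m
  have hmax : G.maxPr U = p := hval
  -- successors (under σ) of infinitely occurring vertices occur infinitely
  have hsucc : ∀ v ∈ U, ∀ w, σ v = some w → w ∈ U := by
    intro v hv w hw n
    obtain ⟨m, hm, hmv⟩ := hv n
    exact ⟨m + 1, by omega, hcons m w (by rw [hmv]; exact hw)⟩
  -- eventually the play stays in U
  have hfin : {n : ℕ | π n ∉ U}.Finite := by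
    have hsub : {n : ℕ | π n ∉ U} ⊆ ⋃ v ∈ {v : V | v ∉ U}, {n : ℕ | π n = v} := by
      intro n hn
      exact Set.mem_biUnion hn rfl
    refine Set.Finite.subset (Set.Finite.biUnion (Set.toFinite _) ?_) hsub
    intro v hv
    simp only [hU, infOcc, Set.mem_setOf_eq, not_forall, not_exists, not_and] at hv
    obtain ⟨n, hn⟩ := hv
    refine Set.Finite.subset (Set.finite_Iio n) ?_
    intro m hm
    simp only [Set.mem_setOf_eq] at hm
    simp only [Set.mem_Iio]
    by_contra hc
    exact hn m (by omega) hm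
  obtain ⟨N, hN⟩ := hfin.bddAbove
  have hU' : ∀ n, N < n → π n ∈ U := by
    intro n hn
    by_contra hc
    exact absurd (hN hc) (by omega)
  have hne : U.Nonempty := ⟨π (N + 1), hU' (N + 1) (by omega)⟩
  set σ' := restrict σ U with hσ'
  have hσ'mem : ∀ v w, σ' v = some w → v ∈ U ∧ σ v = some w := by
    intro v w hvw
    by_cases hv : v ∈ U
    · exact ⟨hv, by simpa [hσ', restrict, hv] using hvw⟩
    · simp [hσ', restrict, hv] at hvw
  have hσ'eq : ∀ v ∈ U, σ' v = σ v := by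
    intro v hv; simp [hσ', restrict, hv]
  -- edges along the tail of the play are subgame edges
  have hstepπ : ∀ j, N < j → G.subEdge U σ' (π j) (π (j + 1)) := by
    intro j hj
    refine ⟨hU' j hj, hU' (j + 1) (by omega), hplay j, ?_⟩
    rw [hσ'eq _ (hU' j hj)]
    cases hσv : σ (π j) with
    | none => exact Or.inl rfl
    | some w => exact Or.inr (by rw [hcons j w hσv])
  have hreach : ∀ d i, N < i →
      Relation.ReflTransGen (G.subEdge U σ') (π i) (π (i + d)) := by
    intro d
    induction d with
    | zero => intro i _; exact Relation.ReflTransGen.refl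
    | succ d ih =>
      intro i hi
      exact Relation.ReflTransGen.tail (ih i hi) (hstepπ (i + d) (by omega))
  refine ⟨U, σ', hUD, ⟨hne, ?_, ?_, ?_, ?_⟩, hmax⟩
  · -- strategy condition
    intro v w hvw
    obtain ⟨hvU, hσv⟩ := hσ'mem v w hvw
    obtain ⟨ho, he⟩ := hstrat v w hσv
    exact ⟨hvU, hsucc v hvU w hσv, by rw [hmax]; exact ho, he⟩
  · -- defined on all α-vertices of U
    intro v hv ho
    rw [hmax] at ho
    obtain ⟨w, _, hw⟩ := hdef v (hUD hv) ho
    rw [hσ'eq v hv, hw]; rfl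
  · -- strong connectivity
    intro u hu v hv
    obtain ⟨i, hi, hiu⟩ := hu (N + 1)
    obtain ⟨m, hm, hmv⟩ := hv i
    have hr := hreach (m - i) i (by omega)
    rw [show i + (m - i) = m by omega, hiu, hmv] at hr
    exact hr
  · -- wins all cycles
    rw [hmax]
    intro v l hcyc
    have hchain : List.Chain (G.subEdge U σ') v (l ++ [v]) := hcyc
    set M := v :: l with hM
    have hMlen : 0 < M.length := by simp [hM]
    set f : ℕ → V := fun k => M.get ⟨k % M.length, Nat.mod_lt _ hMlen⟩ with hf
    have hidx : ∀ k, (k + 1) % M.length = (k % M.length + 1) % M.length := by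
      intro k
      conv_lhs => rw [Nat.add_mod]
      conv_rhs => rw [Nat.add_mod, Nat.mod_mod_of_dvd _ dvd_rfl]
    have hstepf : ∀ k, G.subEdge U σ' (f k) (f (k + 1)) := by
      intro k
      have hcg := cycle_get hchain (k % M.length) (Nat.mod_lt _ hMlen)
      have heq : f (k + 1)
          = M.get ⟨(k % M.length + 1) % M.length, Nat.mod_lt _ hMlen⟩ := by
        simp only [hf]
        congr 1
        exact Fin.ext (hidx k)
      rw [heq]
      exact hcg
    have hMU : ∀ x ∈ M, x ∈ U := by
      intro x hx
      obtain ⟨j, hjx⟩ := List.get_of_mem hx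
      have := (cycle_get hchain j j.isLt).1
      rwa [hjx] at this
    have hfMem : ∀ k, f k ∈ M := fun k => List.get_mem _ _
    have hplayf : G.IsPlay f := fun k => (hstepf k).2.2.1
    have hconsf : Consistent σ f := by
      intro k w hw
      rcases (hstepf k).2.2.2 with hnone | hsome
      · rw [hσ'eq _ (hstepf k).1] at hnone
        rw [hnone] at hw; cases hw
      · rw [hσ'eq _ (hstepf k).1] at hsome
        exact Option.some.inj (hsome.symm.trans hw)
    have hinf : infOcc f = {x | x ∈ M} := by
      ext x
      constructor
      · intro hx
        obtain ⟨m, _, rfl⟩ := hx 0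
        exact hfMem m
      · intro hx n
        obtain ⟨j, hjx⟩ := List.get_of_mem hx
        refine ⟨↑j + M.length * (n + 1), ?_, ?_⟩
        · have h1 : 1 * (n + 1) ≤ M.length * (n + 1) :=
            Nat.mul_le_mul_right _ hMlen
          omega
        · have hmod : (↑j + M.length * (n + 1)) % M.length = ↑j := by
            rw [Nat.add_mul_mod_self_left]
            exact Nat.mod_eq_of_lt j.isLt
          have : f (↑j + M.length * (n + 1)) = M.get j := by
            simp only [hf]
            congr 1
            exact Fin.ext hmod
          rw [this, hjx]
    have hwinf := hwin f ⟨hplayf, hUD (hMU _ (hfMem 0)), hconsf⟩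
    have : playerOf (G.maxPr (infOcc f)) = playerOf p := hwinf
    rwa [hinf] at this

end ParityGame
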